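/- Let V = ℝ^d and let A be a Banach algebra with a strongly continuous isometric action α of V. On the space S(V; A) of A-valued Schwartz functions, define the twisted convolution (f * g)(x) = ∫_V f(y) α_y(g(x−y)) dy. Then f * g ∈ S(V; A) and the operation * is associative and bilinear, making S(V; A) an algebra. -/

import Mathlib

set_option synthInstance.maxHeartbeats 1000000
set_option maxHeartbeats 1000000

open MeasureTheory Filter Metric

abbrev Vd (d : ℕ) := EuclideanSpace ℝ (Fin d)

structure TWHyp (d : ℕ) (E : Type*) [NormedAddCommGroup E] [NormedSpace ℝ E]
    (M : Vd d → E →L[ℝ] E) (b : Vd d → ℝ) : Prop where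
  hb_cont : Continuous b
  hb_nn : ∀ y, 0 ≤ b y
  hb_int : ∀ k : ℕ, Integrable (fun y : Vd d => ‖y‖ ^ k * b y) volume
  hM_bound : ∀ y e, ‖M y e‖ ≤ b y * ‖e‖
  hM_unif : ∀ K : Set E, IsCompact K → ∀ y₀ : Vd d, ∀ ε > 0,
      ∀ᶠ y in nhds y₀, ∀ e ∈ K, ‖M y e - M y₀ e‖ ≤ ε

namespace TWHyp

variable {d : ℕ} {E : Type*} [NormedAddCommGroup E] [NormedSpace ℝ E]
  {M : Vd d → E →L[ℝ] E} {b : Vd d → ℝ}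

lemma hb_int0 (h : TWHyp d E M b) : Integrable b volume := by
  simpa using h.hb_int 0

lemma tendsto_apply (h : TWHyp d E M b) (y₀ : Vd d) (e : E) :
    Tendsto (fun y => M y e) (nhds y₀) (nhds (M y₀ e)) := by
  rw [tendsto_iff_norm_sub_tendsto_zero, NormedAddCommGroup.tendsto_nhds_zero]
  intro ε hε
  filter_upwards [h.hM_unif {e} isCompact_singleton y₀ (ε / 2) (by positivity)] with y hy
  rw [norm_norm]
  exact lt_of_le_of_lt (hy e rfl) (by linarith)

lemma cont_comp (h : TWHyp d E M b) {u : Vd d → E} (hu : Continuous u) :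
    Continuous fun y => M y (u y) := by
  rw [continuous_iff_continuousAt]
  intro y₀
  have h1 : Tendsto (fun y => M y (u y - u y₀)) (nhds y₀) (nhds 0) := by
    apply squeeze_zero_norm (a := fun y => b y * ‖u y - u y₀‖)
      (fun y => h.hM_bound y _)
    have : Tendsto (fun y => b y * ‖u y - u y₀‖) (nhds y₀) (nhds (b y₀ * ‖u y₀ - u y₀‖)) :=
      (h.hb_cont.tendsto y₀).mul (((hu.sub continuous_const).norm).tendsto y₀)
    simpa using this
  have h3 : Tendsto (fun y => M y (u y - u y₀) + M y (u y₀)) (nhds y₀)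
      (nhds (0 + M y₀ (u y₀))) := h1.add (h.tendsto_apply y₀ (u y₀))
  have h4 : (fun y => M y (u y - u y₀) + M y (u y₀)) = fun y => M y (u y) := by
    funext y; rw [map_sub]; abel
  rw [h4, zero_add] at h3
  exact h3

lemma cont_integrand (h : TWHyp d E M b) (G : SchwartzMap (Vd d) E) (x : Vd d) :
    Continuous fun y => M y (G (x - y)) :=
  h.cont_comp (G.continuous.comp (continuous_const.sub continuous_id))

lemma integrable_bound' (h : TWHyp d E M b) (G : SchwartzMap (Vd d) E) (n : ℕ) (x : Vd d) :
    Integrable (fun y => b y * ‖iteratedFDeriv ℝ n (⇑G) (x - y)‖) volume := by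
  refine Integrable.mono' (h.hb_int0.mul_const (SchwartzMap.seminorm ℝ 0 n G)) ?_ ?_
  · exact (h.hb_cont.mul (((G.smooth ⊤).continuous_iteratedFDeriv
      (by exact_mod_cast le_top)).comp (continuous_const.sub continuous_id)).norm).aestronglyMeasurable
  · refine Eventually.of_forall fun y => ?_
    rw [Real.norm_of_nonneg (mul_nonneg (h.hb_nn y) (norm_nonneg _))]
    exact mul_le_mul_of_nonneg_left
      (SchwartzMap.norm_iteratedFDeriv_le_seminorm ℝ G n _) (h.hb_nn y)

lemma integrable_comp (h : TWHyp d E M b) (G : SchwartzMap (Vd d) E) (x : Vd d) :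
    Integrable (fun y => M y (G (x - y))) volume := by
  refine Integrable.mono' (h.integrable_bound' G 0 x)
    (h.cont_integrand G x).aestronglyMeasurable (Eventually.of_forall fun y => ?_)
  refine (h.hM_bound y _).trans ?_
  rw [norm_iteratedFDeriv_zero]

lemma step (h : TWHyp d E M b) :
    TWHyp d (Vd d →L[ℝ] E)
      (fun y => ContinuousLinearMap.compL ℝ (Vd d) E E (M y)) b where
  hb_cont := h.hb_cont
  hb_nn := h.hb_nn
  hb_int := h.hb_int
  hM_bound := by
    intro y T
    refine ContinuousLinearMap.opNorm_le_bound _ (mul_nonneg (h.hb_nn y) (norm_nonneg T))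
      fun v => ?_
    calc ‖M y (T v)‖ ≤ b y * ‖T v‖ := h.hM_bound y _
      _ ≤ b y * (‖T‖ * ‖v‖) := mul_le_mul_of_nonneg_left (T.le_opNorm v) (h.hb_nn y)
      _ = b y * ‖T‖ * ‖v‖ := by ring
  hM_unif := by
    intro K hK y₀ ε hε
    have hK'c : IsCompact ((fun p : (Vd d →L[ℝ] E) × Vd d => p.1 p.2) ''
        (K ×ˢ Metric.closedBall (0 : Vd d) 1)) :=
      (hK.prod (isCompact_closedBall _ _)).image isBoundedBilinearMap_apply.continuous
    filter_upwards [h.hM_unif _ hK'c y₀ ε hε] with y hy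
    intro T hT
    have key : ∀ v : Vd d, ‖M y (T v) - M y₀ (T v)‖ ≤ ε * ‖v‖ := by
      intro v
      rcases eq_or_ne v 0 with rfl | hv
      · simp
      · have hvn : (0:ℝ) < ‖v‖ := norm_pos_iff.2 hv
        have hun : ‖v‖⁻¹ • v ∈ Metric.closedBall (0 : Vd d) 1 := by
          rw [Metric.mem_closedBall, dist_zero_right, norm_smul, norm_inv, norm_norm,
            inv_mul_cancel₀ hvn.ne']
        have hmem : T (‖v‖⁻¹ • v) ∈ (fun p : (Vd d →L[ℝ] E) × Vd d => p.1 p.2) ''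
            (K ×ˢ Metric.closedBall (0 : Vd d) 1) :=
          ⟨(T, ‖v‖⁻¹ • v), ⟨hT, hun⟩, rfl⟩
        have h1 := hy _ hmem
        have h2 : T v = ‖v‖ • T (‖v‖⁻¹ • v) := by
          rw [T.map_smul, smul_smul, mul_inv_cancel₀ hvn.ne', one_smul]
        rw [h2, (M y).map_smul, (M y₀).map_smul, ← smul_sub, norm_smul, norm_norm, mul_comm]
        exact mul_le_mul_of_nonneg_right h1 hvn.le
    refine ContinuousLinearMap.opNorm_le_bound _ hε.le fun v => ?_
    simpa using key v

lemma lipschitz_bound (G : SchwartzMap (Vd d) E) (u v : Vd d) :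
    ‖G u - G v‖ ≤ (SchwartzMap.seminorm ℝ 0 1 G : ℝ) * ‖u - v‖ := by
  have hL : ∀ z, ‖fderiv ℝ (⇑G) z‖ ≤ (SchwartzMap.seminorm ℝ 0 1 G : ℝ) := by
    intro z
    have := SchwartzMap.norm_iteratedFDeriv_le_seminorm ℝ G 1 z
    rwa [← norm_iteratedFDeriv_fderiv, norm_iteratedFDeriv_zero] at this
  have hdiff : Differentiable ℝ (⇑G) := (G.smooth 1).differentiable (by simp)
  have := (Convex.norm_image_sub_le_of_norm_fderiv_le
    (fun z _ => hdiff z) (fun z _ => hL z) convex_univ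
    (Set.mem_univ v)) (Set.mem_univ u)
  simpa using this

lemma hasFDerivAt_conv (h : TWHyp d E M b) [CompleteSpace E] (G : SchwartzMap (Vd d) E)
    (x₀ : Vd d) :
    HasFDerivAt (fun x => ∫ y, M y (G (x - y)))
      (∫ y, (ContinuousLinearMap.compL ℝ (Vd d) E E (M y))
        ((SchwartzMap.fderivCLM ℝ (Vd d) E G) (x₀ - y))) x₀ := by
  set L : ℝ := SchwartzMap.seminorm ℝ 0 1 G with hLdef
  have hL0 : 0 ≤ L := apply_nonneg _ _
  refine (hasFDerivAt_integral_of_dominated_loc_of_lip (𝕜 := ℝ)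
    (F := fun x y => M y (G (x - y)))
    (F' := fun y => (ContinuousLinearMap.compL ℝ (Vd d) E E (M y))
        ((SchwartzMap.fderivCLM ℝ (Vd d) E G) (x₀ - y)))
    (bound := fun y => b y * L) (s := Metric.ball x₀ 1) (Metric.ball_mem_nhds x₀ one_pos) ?_ ?_ ?_ ?_ ?_ ?_).2
  · exact Eventually.of_forall fun x => (h.cont_integrand G x).aestronglyMeasurable
  · exact h.integrable_comp G x₀
  · have hc : Continuous fun y => (SchwartzMap.fderivCLM ℝ (Vd d) E G) (x₀ - y) :=
      (SchwartzMap.fderivCLM ℝ (Vd d) E G).continuous.comp (continuous_const.sub continuous_id)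
    exact (h.step.cont_comp hc).aestronglyMeasurable
  · refine Eventually.of_forall fun y => ?_
    refine LipschitzWith.lipschitzOnWith ?_
    refine LipschitzWith.of_dist_le_mul fun x₁ x₂ => ?_
    rw [dist_eq_norm, dist_eq_norm, ← map_sub]
    have h1 : ‖M y (G (x₁ - y) - G (x₂ - y))‖ ≤ b y * ‖G (x₁ - y) - G (x₂ - y)‖ :=
      h.hM_bound y _
    have h2 : ‖G (x₁ - y) - G (x₂ - y)‖ ≤ L * ‖x₁ - x₂‖ := by
      have := lipschitz_bound G (x₁ - y) (x₂ - y)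
      rwa [sub_sub_sub_cancel_right] at this
    have h3 : ((Real.nnabs (b y * L)) : ℝ) = b y * L := by
      rw [Real.coe_nnabs, abs_of_nonneg (mul_nonneg (h.hb_nn y) hL0)]
    calc ‖M y (G (x₁ - y) - G (x₂ - y))‖ ≤ b y * (L * ‖x₁ - x₂‖) :=
          h1.trans (mul_le_mul_of_nonneg_left h2 (h.hb_nn y))
      _ = (Real.nnabs (b y * L) : ℝ) * ‖x₁ - x₂‖ := by rw [h3]; ring
  · exact h.hb_int0.mul_const L
  · refine Eventually.of_forall fun y => ?_
    have hG : HasFDerivAt (⇑G) (fderiv ℝ (⇑G) (x₀ - y)) (x₀ - y) :=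
      (((G.smooth 1).differentiable (by simp)) (x₀ - y)).hasFDerivAt
    have hsub : HasFDerivAt (fun x : Vd d => x - y) (ContinuousLinearMap.id ℝ (Vd d)) x₀ :=
      (hasFDerivAt_id x₀).sub_const y
    have hcomp := hG.comp x₀ hsub
    have hMcomp := ((M y).hasFDerivAt (x := G (x₀ - y))).comp x₀ hcomp
    have : HasFDerivAt (fun x => M y (G (x - y)))
        ((M y).comp ((fderiv ℝ (⇑G) (x₀ - y)).comp (ContinuousLinearMap.id ℝ (Vd d)))) x₀ := by
      simpa [Function.comp_def] using hMcomp
    simpa [ContinuousLinearMap.comp_id, SchwartzMap.fderivCLM_apply] using this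

theorem conv_main : ∀ (n : ℕ) {E : Type u} [NormedAddCommGroup E] [NormedSpace ℝ E]
    [CompleteSpace E] {M : Vd d → E →L[ℝ] E} {b : Vd d → ℝ} (h : TWHyp d E M b)
    (G : SchwartzMap (Vd d) E),
    ContDiff ℝ n (fun x => ∫ y, M y (G (x - y))) ∧
    ∀ x, ‖iteratedFDeriv ℝ n (fun x => ∫ y, M y (G (x - y))) x‖ ≤
      ∫ y, b y * ‖iteratedFDeriv ℝ n (⇑G) (x - y)‖ := by
  intro n
  induction n with
  | zero =>
    intro E _ _ _ M b h G
    constructor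
    · rw [show ((0:ℕ) : WithTop ℕ∞) = 0 from rfl, contDiff_zero]
      exact continuous_iff_continuousAt.2 fun x => (h.hasFDerivAt_conv G x).continuousAt
    · intro x
      rw [norm_iteratedFDeriv_zero]
      have : ∫ y, b y * ‖iteratedFDeriv ℝ 0 (⇑G) (x - y)‖ = ∫ y, b y * ‖G (x - y)‖ := by
        congr 1; funext y; simp [norm_iteratedFDeriv_zero]
      rw [this]
      exact norm_integral_le_of_norm_le (h.integrable_bound' G 0 x |>.congr
        (Eventually.of_forall fun y => by simp [norm_iteratedFDeriv_zero]))
        (Eventually.of_forall fun y => by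
          simpa [norm_iteratedFDeriv_zero] using h.hM_bound y (G (x - y)))
  | succ n ih =>
    intro E _ _ _ M b h G
    set G' := SchwartzMap.fderivCLM ℝ (Vd d) E G with hG'def
    have hcoe : ⇑G' = fderiv ℝ (⇑G) := funext fun z => SchwartzMap.fderivCLM_apply ℝ G z
    have heq : fderiv ℝ (fun x => ∫ y, M y (G (x - y))) =
        fun x => ∫ y, (ContinuousLinearMap.compL ℝ (Vd d) E E (M y)) (G' (x - y)) :=
      funext fun x => (h.hasFDerivAt_conv G x).fderiv
    obtain ⟨ihc, ihb⟩ := ih h.step G'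
    constructor
    · rw [show (((n+1:ℕ)) : WithTop ℕ∞) = (n : WithTop ℕ∞) + 1 by push_cast; ring]
      refine contDiff_succ_iff_fderiv.2 ⟨fun x => (h.hasFDerivAt_conv G x).differentiableAt,
        ?_, ?_⟩
      · intro hn; exact absurd hn (by simp)
      · rw [heq]; exact ihc
    · intro x
      calc ‖iteratedFDeriv ℝ (n+1) (fun x => ∫ y, M y (G (x - y))) x‖
          = ‖iteratedFDeriv ℝ n (fderiv ℝ (fun x => ∫ y, M y (G (x - y)))) x‖ :=
            (norm_iteratedFDeriv_fderiv).symm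
        _ = ‖iteratedFDeriv ℝ n
              (fun x => ∫ y, (ContinuousLinearMap.compL ℝ (Vd d) E E (M y)) (G' (x - y))) x‖ := by
            rw [heq]
        _ ≤ ∫ y, b y * ‖iteratedFDeriv ℝ n (⇑G') (x - y)‖ := ihb x
        _ = ∫ y, b y * ‖iteratedFDeriv ℝ (n+1) (⇑G) (x - y)‖ := by
            congr 1; funext y; rw [hcoe, norm_iteratedFDeriv_fderiv]

end TWHyp

namespace TWHyp

variable {d : ℕ} {E : Type*} [NormedAddCommGroup E] [NormedSpace ℝ E]
  {M : Vd d → E →L[ℝ] E} {b : Vd d → ℝ}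

lemma pow_add_le (a c : ℝ) (k : ℕ) (ha : 0 ≤ a) (hc : 0 ≤ c) :
    (a + c) ^ k ≤ 2 ^ k * (a ^ k + c ^ k) := by
  have h1 : a + c ≤ 2 * max a c := by
    rcases max_cases a c with ⟨hm, hab⟩ | ⟨hm, hab⟩ <;> rw [hm] <;> linarith
  have h2 : (a + c) ^ k ≤ (2 * max a c) ^ k :=
    pow_le_pow_left₀ (by positivity) h1 k
  have h3 : (max a c) ^ k ≤ a ^ k + c ^ k := by
    rcases max_cases a c with ⟨hm, _⟩ | ⟨hm, _⟩ <;> rw [hm] <;> nlinarith [pow_nonneg ha k, pow_nonneg hc k]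
  calc (a + c) ^ k ≤ (2 * max a c) ^ k := h2
    _ = 2 ^ k * (max a c) ^ k := by rw [mul_pow]
    _ ≤ 2 ^ k * (a ^ k + c ^ k) := by
        exact mul_le_mul_of_nonneg_left h3 (by positivity)

lemma conv_schwartz (h : TWHyp d E M b) [CompleteSpace E] (G : SchwartzMap (Vd d) E) :
    ∃ H : SchwartzMap (Vd d) E, ∀ x, H x = ∫ y, M y (G (x - y)) := by
  refine ⟨⟨fun x => ∫ y, M y (G (x - y)), ?_, ?_⟩, fun x => rfl⟩
  · exact contDiff_infty.2 fun n => (conv_main n h G).1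
  · intro k n
    set Cn : ℝ := SchwartzMap.seminorm ℝ 0 n G with hCn
    set Ck : ℝ := SchwartzMap.seminorm ℝ k n G with hCk
    refine ⟨∫ y, 2 ^ k * ((‖y‖ ^ k * b y) * Cn + b y * Ck), fun x => ?_⟩
    have hCn0 : 0 ≤ Cn := apply_nonneg _ _
    have hCk0 : 0 ≤ Ck := apply_nonneg _ _
    have hmain := (conv_main n h G).2 x
    have step1 : ‖x‖ ^ k * ‖iteratedFDeriv ℝ n (fun x => ∫ y, M y (G (x - y))) x‖ ≤
        ∫ y, ‖x‖ ^ k * (b y * ‖iteratedFDeriv ℝ n (⇑G) (x - y)‖) := by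
      rw [integral_const_mul]
      exact mul_le_mul_of_nonneg_left hmain (by positivity)
    refine step1.trans (integral_mono ?_ ?_ ?_)
    · exact (h.integrable_bound' G n x).const_mul _
    · exact (((h.hb_int k).mul_const Cn).add (h.hb_int0.mul_const Ck)).const_mul _
    · intro y
      have hxk : ‖x‖ ^ k ≤ 2 ^ k * (‖y‖ ^ k + ‖x - y‖ ^ k) := by
        refine le_trans (pow_le_pow_left₀ (norm_nonneg x) ?_ k)
          (pow_add_le _ _ k (norm_nonneg y) (norm_nonneg _))
        calc ‖x‖ = ‖y + (x - y)‖ := by rw [add_sub_cancel]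
          _ ≤ ‖y‖ + ‖x - y‖ := norm_add_le _ _
      have hGn : ‖iteratedFDeriv ℝ n (⇑G) (x - y)‖ ≤ Cn :=
        SchwartzMap.norm_iteratedFDeriv_le_seminorm ℝ G n _
      have hGk : ‖x - y‖ ^ k * ‖iteratedFDeriv ℝ n (⇑G) (x - y)‖ ≤ Ck :=
        SchwartzMap.le_seminorm ℝ k n G _
      have hGn0 : 0 ≤ ‖iteratedFDeriv ℝ n (⇑G) (x - y)‖ := norm_nonneg _
      have hb0 := h.hb_nn y
      calc ‖x‖ ^ k * (b y * ‖iteratedFDeriv ℝ n (⇑G) (x - y)‖)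
          ≤ (2 ^ k * (‖y‖ ^ k + ‖x - y‖ ^ k)) * (b y * ‖iteratedFDeriv ℝ n (⇑G) (x - y)‖) :=
            mul_le_mul_of_nonneg_right hxk (by positivity)
        _ = 2 ^ k * ((‖y‖ ^ k * b y) * ‖iteratedFDeriv ℝ n (⇑G) (x - y)‖
              + b y * (‖x - y‖ ^ k * ‖iteratedFDeriv ℝ n (⇑G) (x - y)‖)) := by ring
        _ ≤ 2 ^ k * ((‖y‖ ^ k * b y) * Cn + b y * Ck) := by
            have t1 : (‖y‖ ^ k * b y) * ‖iteratedFDeriv ℝ n (⇑G) (x - y)‖ ≤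
                (‖y‖ ^ k * b y) * Cn :=
              mul_le_mul_of_nonneg_left hGn (by positivity)
            have t2 : b y * (‖x - y‖ ^ k * ‖iteratedFDeriv ℝ n (⇑G) (x - y)‖) ≤ b y * Ck :=
              mul_le_mul_of_nonneg_left hGk hb0
            have : (0:ℝ) ≤ 2 ^ k := by positivity
            nlinarith [t1, t2]

end TWHyp

section Conc

variable {d : ℕ} {A : Type*} [NormedRing A] [NormedAlgebra ℂ A] [CompleteSpace A]
variable (α : Vd d → (A →ₐ[ℂ] A))

noncomputable def alphaL (hiso : ∀ (x : Vd d) (a : A), ‖α x a‖ = ‖a‖) (y : Vd d) : A →L[ℝ] A :=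
  LinearMap.mkContinuous ((α y).toLinearMap.restrictScalars ℝ) 1
    (fun a => by
      show ‖α y a‖ ≤ 1 * ‖a‖
      rw [hiso]; simp)

@[simp] lemma alphaL_apply (hiso : ∀ (x : Vd d) (a : A), ‖α x a‖ = ‖a‖) (y : Vd d) (a : A) :
    alphaL α hiso y a = α y a := rfl

noncomputable def Mc (hiso : ∀ (x : Vd d) (a : A), ‖α x a‖ = ‖a‖) (f : Vd d → A) (y : Vd d) :
    A →L[ℝ] A :=
  (ContinuousLinearMap.mul ℝ A (f y)).comp (alphaL α hiso y)

@[simp] lemma Mc_apply (hiso : ∀ (x : Vd d) (a : A), ‖α x a‖ = ‖a‖) (f : Vd d → A) (y : Vd d)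
    (a : A) : Mc α hiso f y a = f y * α y a := rfl

lemma alpha_unif (hiso : ∀ (x : Vd d) (a : A), ‖α x a‖ = ‖a‖)
    (hcont : ∀ a : A, Continuous fun x : Vd d => α x a)
    (K : Set A) (hK : IsCompact K) (y₀ : Vd d) {ε : ℝ} (hε : 0 < ε) :
    ∀ᶠ y in nhds y₀, ∀ a ∈ K, ‖α y a - α y₀ a‖ ≤ ε := by
  obtain ⟨t, _, hcover⟩ := hK.elim_nhds_subcover (fun a => Metric.ball a (ε/3))
    (fun a _ => Metric.ball_mem_nhds a (by positivity))
  have hev : ∀ᶠ y in nhds y₀, ∀ a ∈ t, ‖α y a - α y₀ a‖ < ε/3 := by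
    rw [Filter.eventually_all_finset]
    intro a _
    have := Metric.tendsto_nhds.1 ((hcont a).tendsto y₀) (ε/3) (by positivity)
    filter_upwards [this] with y hy
    rwa [dist_eq_norm] at hy
  filter_upwards [hev] with y hy a haK
  obtain ⟨c, hct, hac⟩ := Set.mem_iUnion₂.1 (hcover haK)
  rw [Metric.mem_ball, dist_eq_norm] at hac
  have h1 : ‖α y a - α y c‖ < ε/3 := by rw [← map_sub, hiso]; exact hac
  have h2 : ‖α y₀ c - α y₀ a‖ < ε/3 := by
    rw [← map_sub, hiso, norm_sub_rev]; exact hac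
  have h3 := hy c hct
  calc ‖α y a - α y₀ a‖
      = ‖(α y a - α y c) + (α y c - α y₀ c) + (α y₀ c - α y₀ a)‖ := by
        congr 1; abel
    _ ≤ ‖α y a - α y c‖ + ‖α y c - α y₀ c‖ + ‖α y₀ c - α y₀ a‖ := norm_add₃_le
    _ ≤ ε := by linarith

lemma TWHyp_conc (hiso : ∀ (x : Vd d) (a : A), ‖α x a‖ = ‖a‖)
    (hcont : ∀ a : A, Continuous fun x : Vd d => α x a)
    (f : SchwartzMap (Vd d) A) :
    TWHyp d A (Mc α hiso ⇑f) (fun y => ‖f y‖) where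
  hb_cont := f.continuous.norm
  hb_nn := fun y => norm_nonneg _
  hb_int := fun k => f.integrable_pow_mul volume k
  hM_bound := by
    intro y e
    rw [Mc_apply]
    exact (norm_mul_le _ _).trans (by rw [hiso])
  hM_unif := by
    intro K hK y₀ ε hε
    obtain ⟨R, hR⟩ := hK.isBounded.subset_closedBall 0
    set R' : ℝ := |R| + 1 with hR'
    have hR'0 : 0 < R' := by positivity
    have haR : ∀ a ∈ K, ‖a‖ ≤ R' := by
      intro a ha
      have := hR ha
      rw [Metric.mem_closedBall, dist_zero_right] at this
      refine this.trans ?_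
      have := le_abs_self R
      rw [hR']; linarith
    have e1 : ∀ᶠ y in nhds y₀, ‖f y - f y₀‖ < ε / (2 * R') := by
      have := Metric.tendsto_nhds.1 (f.continuous.tendsto y₀) (ε / (2 * R')) (by positivity)
      filter_upwards [this] with y hy
      rwa [dist_eq_norm] at hy
    have e2 := alpha_unif α hiso hcont K hK y₀
      (ε := ε / (2 * (‖f y₀‖ + 1))) (by positivity)
    filter_upwards [e1, e2] with y hy1 hy2 a haK
    rw [Mc_apply, Mc_apply]
    have hdecomp : f y * α y a - f y₀ * α y₀ a
        = (f y - f y₀) * α y a + f y₀ * (α y a - α y₀ a) := by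
      rw [sub_mul, mul_sub]; abel
    rw [hdecomp]
    have t1 : ‖(f y - f y₀) * α y a‖ ≤ (ε / (2 * R')) * R' := by
      refine (norm_mul_le _ _).trans ?_
      rw [hiso]
      exact mul_le_mul hy1.le (haR a haK) (norm_nonneg _) (by positivity)
    have t2 : ‖f y₀ * (α y a - α y₀ a)‖ ≤ ‖f y₀‖ * (ε / (2 * (‖f y₀‖ + 1))) :=
      (norm_mul_le _ _).trans (mul_le_mul_of_nonneg_left (hy2 a haK) (norm_nonneg _))
    have t3 : (ε / (2 * R')) * R' = ε / 2 := by field_simp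
    have t4 : ‖f y₀‖ * (ε / (2 * (‖f y₀‖ + 1))) ≤ ε / 2 := by
      have h5 : ‖f y₀‖ * (ε / (2 * (‖f y₀‖ + 1))) ≤ (‖f y₀‖ + 1) * (ε / (2 * (‖f y₀‖ + 1))) :=
        mul_le_mul_of_nonneg_right (by linarith) (by positivity)
      have h6 : (‖f y₀‖ + 1) * (ε / (2 * (‖f y₀‖ + 1))) = ε / 2 := by
        have : (‖f y₀‖ + 1) ≠ 0 := by positivity
        field_simp
      linarith
    calc ‖(f y - f y₀) * α y a + f y₀ * (α y a - α y₀ a)‖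
        ≤ ‖(f y - f y₀) * α y a‖ + ‖f y₀ * (α y a - α y₀ a)‖ := norm_add_le _ _
      _ ≤ ε / 2 + ε / 2 := add_le_add (t3 ▸ t1) (t2.trans t4)
      _ = ε := by ring

end Conc

section Final

variable {d : ℕ} {A : Type*} [NormedRing A] [NormedAlgebra ℂ A] [CompleteSpace A]
variable (α : Vd d → (A →ₐ[ℂ] A))

lemma intg (hiso : ∀ (x : Vd d) (a : A), ‖α x a‖ = ‖a‖)
    (hcont : ∀ a : A, Continuous fun x : Vd d => α x a)
    (f g : SchwartzMap (Vd d) A) (x : Vd d) :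
    Integrable (fun y => f y * α y (g (x - y))) volume :=
  (TWHyp_conc α hiso hcont f).integrable_comp g x

lemma cont_alpha (hiso : ∀ (x : Vd d) (a : A), ‖α x a‖ = ‖a‖)
    (hcont : ∀ a : A, Continuous fun x : Vd d => α x a)
    {X : Type*} [TopologicalSpace X] {u : X → Vd d} {w : X → A}
    (hu : Continuous u) (hw : Continuous w) :
    Continuous fun p => α (u p) (w p) := by
  rw [continuous_iff_continuousAt]
  intro p₀
  have h1 : Filter.Tendsto (fun p => α (u p) (w p - w p₀)) (nhds p₀) (nhds 0) := by
    apply squeeze_zero_norm (a := fun p => ‖w p - w p₀‖) (fun p => by rw [hiso])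
    have : Filter.Tendsto (fun p => ‖w p - w p₀‖) (nhds p₀) (nhds ‖w p₀ - w p₀‖) :=
      ((hw.sub continuous_const).norm).tendsto p₀
    simpa using this
  have h2 : Filter.Tendsto (fun p => α (u p) (w p₀)) (nhds p₀) (nhds (α (u p₀) (w p₀))) :=
    ((hcont (w p₀)).tendsto (u p₀)).comp (hu.tendsto p₀)
  have h3 := h1.add h2
  rw [zero_add] at h3
  have h4 : (fun p => α (u p) (w p - w p₀) + α (u p) (w p₀)) = fun p => α (u p) (w p) := by
    funext p; rw [map_sub]; abel
  rw [h4] at h3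
  exact h3

end Final

/-- Twisted convolution `(f * g)(x) = ∫ f(y) α_y(g(x−y)) dy` on `A`-valued functions. -/
noncomputable def twConv {d : ℕ} {A : Type*} [NormedRing A] [NormedAlgebra ℂ A]
    [CompleteSpace A] (α : Vd d → (A →ₐ[ℂ] A)) (f g : Vd d → A) : Vd d → A :=
  fun x => ∫ y : Vd d, f y * α y (g (x - y))

theorem stmt8 (d : ℕ) {A : Type*} [NormedRing A] [NormedAlgebra ℂ A] [CompleteSpace A]
    (α : Vd d → (A →ₐ[ℂ] A))
    (hα0 : α 0 = AlgHom.id ℂ A)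
    (hαadd : ∀ x y : Vd d, α (x + y) = (α x).comp (α y))
    (hiso : ∀ (x : Vd d) (a : A), ‖α x a‖ = ‖a‖)
    (hcont : ∀ a : A, Continuous fun x : Vd d => α x a) :
    -- f * g is again Schwartz
    (∀ f g : SchwartzMap (Vd d) A,
      ∃ h : SchwartzMap (Vd d) A, ∀ x, h x = twConv α (⇑f) (⇑g) x) ∧
    -- associativity
    (∀ f g k : SchwartzMap (Vd d) A, ∀ x,
      twConv α (twConv α (⇑f) (⇑g)) (⇑k) x = twConv α (⇑f) (twConv α (⇑g) (⇑k)) x) ∧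
    -- bilinearity
    (∀ f g k : SchwartzMap (Vd d) A, ∀ x,
      twConv α (fun y => f y + g y) (⇑k) x = twConv α (⇑f) (⇑k) x + twConv α (⇑g) (⇑k) x) ∧
    (∀ f g k : SchwartzMap (Vd d) A, ∀ x,
      twConv α (⇑f) (fun y => g y + k y) x = twConv α (⇑f) (⇑g) x + twConv α (⇑f) (⇑k) x) ∧
    (∀ (c : ℂ) (f g : SchwartzMap (Vd d) A), ∀ x,
      twConv α (fun y => c • f y) (⇑g) x = c • twConv α (⇑f) (⇑g) x ∧
      twConv α (⇑f) (fun y => c • g y) x = c • twConv α (⇑f) (⇑g) x) := by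
  have hint : ∀ (f g : SchwartzMap (Vd d) A) (x : Vd d),
      Integrable (fun y => f y * α y (g (x - y))) volume := intg α hiso hcont
  refine ⟨?_, ?_, ?_, ?_, ?_⟩
  · -- Schwartz
    intro f g
    obtain ⟨H, hH⟩ := (TWHyp_conc α hiso hcont f).conv_schwartz g
    exact ⟨H, fun x => hH x⟩
  · -- associativity
    intro f g k x
    set H : Vd d → Vd d → A := fun y z => f y * α y (g (z - y)) * α z (k (x - z)) with hHdef
    set Ck : ℝ := SchwartzMap.seminorm ℝ 0 0 k with hCkdef
    have hmeas : AEStronglyMeasurable (Function.uncurry fun z y => H y z)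
        (volume.prod volume) := by
      apply Continuous.aestronglyMeasurable
      apply Continuous.mul
      · apply Continuous.mul
        · exact f.continuous.comp continuous_snd
        · exact cont_alpha α hiso hcont continuous_snd
            (g.continuous.comp (continuous_fst.sub continuous_snd))
      · exact cont_alpha α hiso hcont continuous_fst
          (k.continuous.comp (continuous_const.sub continuous_fst))
    have hintProd : Integrable (Function.uncurry fun z y => H y z) (volume.prod volume) := by
      have base := Integrable.convolution_integrand (𝕜 := ℝ) (ContinuousLinearMap.mul ℝ ℝ)
        ((f.integrable (μ := volume)).norm) ((g.integrable (μ := volume)).norm)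
      refine Integrable.mono' (base.mul_const Ck) hmeas (Filter.Eventually.of_forall fun p => ?_)
      show ‖f p.2 * α p.2 (g (p.1 - p.2)) * α p.1 (k (x - p.1))‖ ≤
        (ContinuousLinearMap.mul ℝ ℝ) ‖f p.2‖ ‖g (p.1 - p.2)‖ * Ck
      have : (ContinuousLinearMap.mul ℝ ℝ) ‖f p.2‖ ‖g (p.1 - p.2)‖ = ‖f p.2‖ * ‖g (p.1 - p.2)‖ :=
        rfl
      rw [this]
      calc ‖f p.2 * α p.2 (g (p.1 - p.2)) * α p.1 (k (x - p.1))‖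
          ≤ ‖f p.2 * α p.2 (g (p.1 - p.2))‖ * ‖α p.1 (k (x - p.1))‖ := norm_mul_le _ _
        _ ≤ ‖f p.2‖ * ‖α p.2 (g (p.1 - p.2))‖ * ‖α p.1 (k (x - p.1))‖ :=
            mul_le_mul_of_nonneg_right (norm_mul_le _ _) (norm_nonneg _)
        _ = ‖f p.2‖ * ‖g (p.1 - p.2)‖ * ‖k (x - p.1)‖ := by rw [hiso, hiso]
        _ ≤ ‖f p.2‖ * ‖g (p.1 - p.2)‖ * Ck :=
            mul_le_mul_of_nonneg_left (SchwartzMap.norm_le_seminorm ℝ k _)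
              (by positivity)
    have e1 : twConv α (twConv α (⇑f) (⇑g)) (⇑k) x = ∫ z, ∫ y, H y z := by
      show (∫ z, (∫ y, f y * α y (g (z - y))) * α z (k (x - z))) = _
      congr 1; funext z
      have h5 := ((ContinuousLinearMap.mul ℝ A).flip (α z (k (x - z)))).integral_comp_comm
        (hint f g z)
      simpa [ContinuousLinearMap.flip_apply] using h5.symm
    have e2 : twConv α (⇑f) (twConv α (⇑g) (⇑k)) x = ∫ y, ∫ z, H y z := by
      show (∫ y, f y * α y ((twConv α (⇑g) (⇑k)) (x - y))) = _
      congr 1; funext y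
      have step1 : f y * α y ((twConv α (⇑g) (⇑k)) (x - y)) =
          ∫ t, f y * α y (g t * α t (k (x - y - t))) := by
        exact ((Mc α hiso (⇑f) y).integral_comp_comm (hint g k (x - y))).symm
      rw [step1]
      have step2 : ∀ t, f y * α y (g t * α t (k (x - y - t))) = H y (y + t) := by
        intro t
        have h1 : y + t - y = t := by abel
        have h2 : x - y - t = x - (y + t) := by abel
        have h3 : α (y + t) (k (x - (y + t))) = α y (α t (k (x - (y + t)))) := by
          rw [hαadd]; rfl
        rw [hHdef]
        simp only [h1]
        rw [h3, ← h2, map_mul, mul_assoc]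
      calc (∫ t, f y * α y (g t * α t (k (x - y - t))))
          = ∫ t, H y (y + t) := by congr 1; funext t; exact step2 t
        _ = ∫ z, H y z := integral_add_left_eq_self (H y) y
    have hswap : (∫ z, ∫ y, H y z) = ∫ y, ∫ z, H y z := integral_integral_swap hintProd
    rw [e1, hswap, ← e2]
  · -- additivity left
    intro f g k x
    show (∫ y, (f y + g y) * α y (k (x - y))) =
      (∫ y, f y * α y (k (x - y))) + ∫ y, g y * α y (k (x - y))
    rw [← integral_add (hint f k x) (hint g k x)]
    congr 1; funext y; rw [add_mul]
  · -- additivity right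
    intro f g k x
    show (∫ y, f y * α y (g (x - y) + k (x - y))) =
      (∫ y, f y * α y (g (x - y))) + ∫ y, f y * α y (k (x - y))
    rw [← integral_add (hint f g x) (hint f k x)]
    congr 1; funext y; rw [map_add, mul_add]
  · -- scalar multiplication
    intro c f g x
    constructor
    · show (∫ y, (c • f y) * α y (g (x - y))) = c • ∫ y, f y * α y (g (x - y))
      rw [← integral_smul]
      congr 1; funext y; rw [smul_mul_assoc]
    · show (∫ y, f y * α y (c • g (x - y))) = c • ∫ y, f y * α y (g (x - y))
      rw [← integral_smul]
      congr 1; funext y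
      rw [_root_.map_smul (α y) c (g (x - y)), mul_smul_comm]
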